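/- arXiv:1511.09078 — 2 statements merged into one kernel-verified Lean document; each statement's English description precedes it below -/
import Mathlib

section
/- Let y ∈ ℝ^p, let d₁,…,d_p be positive numbers with D = diag(d₁,…,d_p), let λ₁ ≥ … ≥ λ_p ≥ 0, and let b* be the unique minimizer of f(b) = ½‖y − Db‖₂² + J_λ(b) over ℝ^p. If y ⪰ 0 (all coordinates of y are nonnegative), then b* ⪰ 0. -/
/-- The nonincreasing rearrangement of the absolute values of the coordinates of `b`. -/
noncomputable def sortedAbs {p : ℕ} (b : Fin p → ℝ) : Fin p → ℝ :=
  fun i => |b (Tuple.sort (fun j => |b j|) (Fin.rev i))|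

/-- The sorted ℓ₁ norm `J_λ(b) = Σ_i λ_i |b|_{(i)}`. -/
noncomputable def Jlam {p : ℕ} (lam b : Fin p → ℝ) : ℝ :=
  ∑ i, lam i * sortedAbs b i

/-- The SLOPE objective with diagonal design matrix `D = diag(d₁,…,d_p)`:
`f(b) = ½ ‖y − D b‖₂² + J_λ(b)`. -/
noncomputable def slopeObj {p : ℕ} (d y lam : Fin p → ℝ) (b : Fin p → ℝ) : ℝ :=
  (1 / 2) * ∑ i, (y i - d i * b i) ^ 2 + Jlam lam b

lemma sortedAbs_antitone {p : ℕ} (b : Fin p → ℝ) : Antitone (sortedAbs b) := by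
  have h := Tuple.monotone_sort (fun j => |b j|)
  intro i j hij
  have : Fin.rev j ≤ Fin.rev i := Fin.rev_le_rev.mpr hij
  exact h this

lemma rearrange_le_Jlam {p : ℕ} (lam b : Fin p → ℝ)
    (hlam_anti : ∀ i j : Fin p, i ≤ j → lam j ≤ lam i)
    (σ : Equiv.Perm (Fin p)) :
    ∑ i, lam i * sortedAbs b (σ i) ≤ Jlam lam b := by
  have hmono : Monovary lam (sortedAbs b) := by
    intro i j hij
    rcases le_total i j with h | h
    · exact (not_lt.mpr (sortedAbs_antitone b h)).elim hij
    · exact hlam_anti j i h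
  simpa [Jlam, smul_eq_mul] using hmono.sum_smul_comp_perm_le_sum_smul (σ := σ)

lemma Jlam_mono {p : ℕ} (lam b c : Fin p → ℝ)
    (hlam_anti : ∀ i j : Fin p, i ≤ j → lam j ≤ lam i)
    (hlam_nonneg : ∀ i, 0 ≤ lam i)
    (hcb : ∀ i, |c i| ≤ |b i|) :
    Jlam lam c ≤ Jlam lam b := by
  set τ : Equiv.Perm (Fin p) := Tuple.sort (fun j => |c j|)
  set σb : Equiv.Perm (Fin p) := Tuple.sort (fun j => |b j|)
  set π : Equiv.Perm (Fin p) :=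
    Fin.revPerm.trans (τ.trans (σb.symm.trans Fin.revPerm))
  have key : ∀ i, sortedAbs c i ≤ sortedAbs b (π i) := by
    intro i
    have h1 : sortedAbs c i = |c (τ (Fin.rev i))| := rfl
    have h2 : sortedAbs b (π i) = |b (τ (Fin.rev i))| := by
      show |b (σb (Fin.rev (π i)))| = _
      have : Fin.rev (π i) = σb.symm (τ (Fin.rev i)) := by
        simp [π, Equiv.trans_apply, Fin.revPerm_apply, Fin.rev_rev]
      rw [this, Equiv.apply_symm_apply]
    rw [h1, h2]
    exact hcb _
  calc Jlam lam c = ∑ i, lam i * sortedAbs c i := rfl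
    _ ≤ ∑ i, lam i * sortedAbs b (π i) := by
        apply Finset.sum_le_sum
        intro i _
        exact mul_le_mul_of_nonneg_left (key i) (hlam_nonneg i)
    _ ≤ Jlam lam b := rearrange_le_Jlam lam b hlam_anti π

/-- If `y ⪰ 0`, the (unique) minimizer of the diagonal SLOPE objective is nonnegative. -/
theorem slope_minimizer_nonneg {p : ℕ} (d y lam : Fin p → ℝ)
    (hd : ∀ i, 0 < d i)
    (hlam_anti : ∀ i j : Fin p, i ≤ j → lam j ≤ lam i)
    (hlam_nonneg : ∀ i, 0 ≤ lam i)
    (hy : ∀ i, 0 ≤ y i)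
    (bstar : Fin p → ℝ)
    (hbstar : ∀ b, slopeObj d y lam bstar ≤ slopeObj d y lam b) :
    ∀ i, 0 ≤ bstar i := by
  by_contra h
  push_neg at h
  obtain ⟨i0, hi0⟩ := h
  set c : Fin p → ℝ := fun j => max (bstar j) 0 with hc
  have hcb : ∀ j, |c j| ≤ |bstar j| := by
    intro j
    rcases le_total (bstar j) 0 with h | h
    · simp [hc, max_eq_right h, abs_nonneg]
    · simp [hc, max_eq_left h]
  have hJ : Jlam lam c ≤ Jlam lam bstar :=
    Jlam_mono lam bstar c hlam_anti hlam_nonneg hcb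
  have hquad_le : ∀ j, (y j - d j * c j) ^ 2 ≤ (y j - d j * bstar j) ^ 2 := by
    intro j
    rcases le_or_gt 0 (bstar j) with h | h
    · simp [hc, max_eq_left h]
    · have : c j = 0 := max_eq_right h.le
      rw [this]
      nlinarith [hy j, (hd j), mul_pos (hd j) (neg_pos.mpr h)]
  have hquad_lt : (y i0 - d i0 * c i0) ^ 2 < (y i0 - d i0 * bstar i0) ^ 2 := by
    have : c i0 = 0 := max_eq_right hi0.le
    rw [this]
    nlinarith [hy i0, mul_pos (hd i0) (neg_pos.mpr hi0)]
  have hsum : ∑ j, (y j - d j * c j) ^ 2 < ∑ j, (y j - d j * bstar j) ^ 2 :=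
    Finset.sum_lt_sum (fun j _ => hquad_le j) ⟨i0, Finset.mem_univ i0, hquad_lt⟩
  have : slopeObj d y lam c < slopeObj d y lam bstar := by
    unfold slopeObj
    have := hsum
    nlinarith [hJ]
  exact absurd (hbstar c) (not_le.mpr this)
end

section
/- Let y ∈ ℝ^p be a nonnegative vector, let d₁,…,d_p be positive numbers with d₁y₁ ≥ d₂y₂ ≥ … ≥ d_p y_p, let D = diag(d₁,…,d_p), let λ₁ ≥ … ≥ λ_p ≥ 0, and let b* be the unique minimizer of f(b) = ½‖y − Db‖₂² + J_λ(b) over ℝ^p. If b* has exactly r nonzero entries with r > 0, then the support of b* is exactly the set {1,…,r}, i.e. (b*)_i ≠ 0 if and only if i ≤ r. -/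
/-- If for all small `ε > 0` we have `0 ≤ a ε + c ε²`, then `0 ≤ a`. -/
lemma aux_limit (a c ε₀ : ℝ) (hc : 0 ≤ c) (hε₀ : 0 < ε₀)
    (h : ∀ ε : ℝ, 0 < ε → ε < ε₀ → 0 ≤ a * ε + c * ε ^ 2) : 0 ≤ a := by
  by_contra hneg
  push_neg at hneg
  set ε := min (ε₀ / 2) ((-a) / (c + 1)) with hε
  have hε1 : 0 < ε := lt_min (by linarith) (div_pos (by linarith) (by linarith))
  have hε2 : ε < ε₀ := lt_of_le_of_lt (min_le_left _ _) (by linarith)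
  have h3 : ε ≤ (-a) / (c + 1) := min_le_right _ _
  have h4 : (c + 1) * ε ≤ -a := by
    have := (le_div_iff₀ (by linarith : (0:ℝ) < c + 1)).mp h3
    linarith
  nlinarith [h ε hε1 hε2]

/-- A downward closed subset of `Fin p` of cardinality `r` is exactly `{i | i < r}`. -/
lemma initseg {p r : ℕ} (S : Set (Fin p)) (hdc : ∀ i j : Fin p, i ≤ j → j ∈ S → i ∈ S)
    (hcard : S.ncard = r) (i : Fin p) : i ∈ S ↔ (i : ℕ) < r := by
  constructor
  · intro hi
    have hsub : ((Finset.Iic i : Finset (Fin p)) : Set (Fin p)) ⊆ S := by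
      intro j hj
      simp only [Finset.coe_Iic, Set.mem_Iic] at hj
      exact hdc j i hj hi
    have := Set.ncard_le_ncard hsub (Set.toFinite S)
    rw [Set.ncard_coe_finset, Fin.card_Iic, hcard] at this
    omega
  · intro hi
    by_contra hni
    have hsub : S ⊆ ((Finset.Iio i : Finset (Fin p)) : Set (Fin p)) := by
      intro j hj
      simp only [Finset.coe_Iio, Set.mem_Iio]
      by_contra hji
      push_neg at hji
      exact hni (hdc i j hji hj)
    have := Set.ncard_le_ncard hsub (Set.toFinite _)
    rw [Set.ncard_coe_finset, Fin.card_Iio, hcard] at this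
    omega

/-- The sorting permutation underlying `sortedAbs`. -/
noncomputable def sortPerm {p : ℕ} (b : Fin p → ℝ) : Equiv.Perm (Fin p) :=
  (Fin.revPerm).trans (Tuple.sort (fun j => |b j|))

lemma sortedAbs_eq_perm {p : ℕ} (b : Fin p → ℝ) (k : Fin p) :
    sortedAbs b k = |b (sortPerm b k)| := rfl

lemma sortedAbs_nonneg {p : ℕ} (b : Fin p → ℝ) (k : Fin p) : 0 ≤ sortedAbs b k :=
  abs_nonneg _

/-- Rearrangement inequality specialization: pairing two antitone sequences is maximal. -/
lemma sum_mul_perm_le {p : ℕ} (lam v : Fin p → ℝ)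
    (hlam : Antitone lam) (hv : Antitone v) (σ : Equiv.Perm (Fin p)) :
    ∑ k, lam k * v (σ k) ≤ ∑ k, lam k * v k := by
  have hmono : Monovary lam v := by
    intro a b hab
    rcases le_or_gt b a with h | h
    · exact hlam h
    · exact absurd (hv h.le) (not_le.mpr hab)
  exact hmono.sum_mul_comp_perm_le_sum_mul

/-- If `v` is an antitone arrangement of the absolute values of `b`, then
`J_λ(b) ≤ ∑ λ k * v k`. -/
lemma Jlam_le {p : ℕ} (lam : Fin p → ℝ) (hlam : Antitone lam)
    (b v : Fin p → ℝ) (hv : Antitone v) (g : Equiv.Perm (Fin p))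
    (hg : ∀ k, v k = |b (g k)|) :
    Jlam lam b ≤ ∑ k, lam k * v k := by
  have h1 : ∀ k, sortedAbs b k = v (((sortPerm b).trans g.symm) k) := by
    intro k
    rw [Equiv.trans_apply, hg, Equiv.apply_symm_apply, sortedAbs_eq_perm]
  calc Jlam lam b = ∑ k, lam k * v (((sortPerm b).trans g.symm) k) := by
        unfold Jlam
        exact Finset.sum_congr rfl (fun k _ => by rw [h1])
    _ ≤ _ := sum_mul_perm_le lam v hlam hv _

lemma sum_comp_update {p : ℕ} (F : Fin p → ℝ → ℝ) (u : Fin p → ℝ) (a : Fin p) (x : ℝ) :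
    ∑ k, F k (Function.update u a x k) = (∑ k, F k (u k)) + (F a x - F a (u a)) := by
  have h : ∀ k, F k (Function.update u a x k)
      = Function.update (fun k => F k (u k)) a (F a x) k := by
    intro k
    rcases eq_or_ne k a with rfl | hk
    · simp
    · simp [Function.update_of_ne hk]
  rw [Finset.sum_congr rfl (fun k _ => h k),
    Finset.sum_update_of_mem (Finset.mem_univ a), ← Finset.erase_eq,
    ← Finset.sum_erase_add _ _ (Finset.mem_univ a)]
  ring

set_option maxHeartbeats 1600000 in
/-- Key step: the support of a minimizer is downward closed. -/
lemma key_step {p : ℕ} (d y lam : Fin p → ℝ)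
    (hd : ∀ i, 0 < d i)
    (hlam_anti : ∀ i j : Fin p, i ≤ j → lam j ≤ lam i)
    (hlam_nonneg : ∀ i, 0 ≤ lam i)
    (hy : ∀ i, 0 ≤ y i)
    (hord : ∀ i j : Fin p, i ≤ j → d j * y j ≤ d i * y i)
    (bstar : Fin p → ℝ)
    (hbstar : ∀ b, slopeObj d y lam bstar ≤ slopeObj d y lam b)
    (r : ℕ)
    (hcard : {k : Fin p | bstar k ≠ 0}.ncard = r)
    (i j : Fin p) (hij : i ≤ j) (hj : bstar j ≠ 0) : bstar i ≠ 0 := by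
  intro hi
  have hlamA : Antitone lam := fun a b h => hlam_anti a b h
  set u := sortedAbs bstar with hu_def
  set e := sortPerm bstar with he_def
  have hu_e : ∀ k, u k = |bstar (e k)| := fun k => rfl
  have hu_anti : Antitone u := sortedAbs_antitone bstar
  have hu_nonneg : ∀ k, 0 ≤ u k := sortedAbs_nonneg bstar
  have hucard : {k : Fin p | u k ≠ 0}.ncard = r := by
    have hset : {k : Fin p | u k ≠ 0} = e.symm '' {k : Fin p | bstar k ≠ 0} := by
      ext k
      simp only [Set.mem_setOf_eq, Set.mem_image]
      constructor
      · intro h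
        exact ⟨e k, by simpa [hu_e, abs_ne_zero] using h, by simp⟩
      · rintro ⟨x, hx, rfl⟩
        simpa [hu_e, abs_ne_zero] using hx
    rw [hset, Set.ncard_image_of_injective _ e.symm.injective, hcard]
  have hu_iff : ∀ k : Fin p, u k ≠ 0 ↔ (k : ℕ) < r := by
    refine initseg _ (fun a b hab hb => ?_) hucard
    have h1 : u b ≤ u a := hu_anti hab
    have h2 : 0 < u b := (hu_nonneg b).lt_of_ne (Ne.symm hb)
    exact ne_of_gt (lt_of_lt_of_le h2 h1)
  -- the index where `u` hits coordinate `i`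
  set k0 := e.symm i with hk0_def
  have hek0 : e k0 = i := e.apply_symm_apply i
  have huk0 : u k0 = 0 := by rw [hu_e, hek0, hi, abs_zero]
  have hk0r : r ≤ (k0 : ℕ) := by
    by_contra h
    push_neg at h
    exact ((hu_iff k0).mpr h) huk0
  have hrp : r < p := lt_of_le_of_lt hk0r k0.isLt
  -- the index where `u` hits coordinate `j`
  set t := bstar j with ht_def
  have htne : t ≠ 0 := hj
  set k1 := e.symm j with hk1_def
  have hek1 : e k1 = j := e.apply_symm_apply j
  have huk1 : u k1 = |t| := by rw [hu_e, hek1]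
  have htpos : 0 < |t| := abs_pos.mpr htne
  have hk1r : (k1 : ℕ) < r := (hu_iff k1).mp (by rw [huk1]; exact abs_ne_zero.mpr htne)
  have hr0 : 0 < r := by omega
  set a : Fin p := ⟨r, hrp⟩ with ha_def
  have ha_val : (a : ℕ) = r := rfl
  have hua : u a = 0 := by
    by_contra h
    have := (hu_iff a).mp h
    omega
  set rm : Fin p := ⟨r - 1, by omega⟩ with hrm_def
  have hrm_val : (rm : ℕ) = r - 1 := rfl
  have hurm : 0 < u rm := by
    have hne : u rm ≠ 0 := (hu_iff rm).mpr (by omega)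
    exact (hu_nonneg rm).lt_of_ne (Ne.symm hne)
  ---------------------------------------------------------------------------
  -- Part A : d i * y i ≤ lam a
  ---------------------------------------------------------------------------
  have hA : d i * y i ≤ lam a := by
    have key : ∀ ε : ℝ, 0 < ε → ε < u rm →
        0 ≤ (lam a - d i * y i) * ε + (d i ^ 2 / 2) * ε ^ 2 := by
      intro ε hε1 hε2
      set b' := Function.update bstar i ε with hb'_def
      have hb'_val : ∀ k, b' k = if k = i then ε else bstar k := by
        intro k; rw [hb'_def, Function.update_apply]
      set v := Function.update u a ε with hv_def
      have hv_val : ∀ k, v k = if k = a then ε else u k := by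
        intro k; rw [hv_def, Function.update_apply]
      have hv_anti : Antitone v := by
        intro k l hkl
        rw [hv_val, hv_val]
        by_cases hk : k = a <;> by_cases hl : l = a
        · rw [if_pos hk, if_pos hl]
        · rw [if_pos hk, if_neg hl]
          have h1 : (a : ℕ) ≤ (l : ℕ) := by rw [← hk]; exact Fin.le_def.mp hkl
          have h2 : (l : ℕ) ≠ (a : ℕ) := fun hh => hl (Fin.ext hh)
          have hul : u l = 0 := by
            by_contra hcon
            have := (hu_iff l).mp hcon
            omega
          rw [hul]
          linarith
        · rw [if_neg hk, if_pos hl]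
          have h1 : (k : ℕ) ≤ (a : ℕ) := by rw [← hl]; exact Fin.le_def.mp hkl
          have h2 : (k : ℕ) ≠ (a : ℕ) := fun hh => hk (Fin.ext hh)
          have h3 : k ≤ rm := by rw [Fin.le_def]; omega
          linarith [hu_anti h3]
        · rw [if_neg hk, if_neg hl]; exact hu_anti hkl
      set g := (Equiv.swap a k0).trans e with hg_def
      have hvg : ∀ k, v k = |b' (g k)| := by
        intro k
        rcases eq_or_ne k a with rfl | hka
        · have hgk : g a = i := by
            show e ((Equiv.swap a k0) a) = i
            rw [Equiv.swap_apply_left, hek0]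
          rw [hv_val, if_pos rfl, hgk, hb'_val, if_pos rfl, abs_of_pos hε1]
        · rcases eq_or_ne k k0 with rfl | hkk0
          · have hgk : g k0 = e a := by
              show e ((Equiv.swap a k0) k0) = e a
              rw [Equiv.swap_apply_right]
            have hea : e a ≠ i := by
              intro h
              apply hka
              have : e.symm i = a := by rw [← h, Equiv.symm_apply_apply]
              rw [hk0_def, this]
            rw [hv_val, if_neg hka, hgk, hb'_val, if_neg hea, ← hu_e, hua, huk0]
          · have hgk : g k = e k := by
              rw [hg_def, Equiv.trans_apply, Equiv.swap_apply_of_ne_of_ne hka hkk0]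
            have hek : e k ≠ i := fun h => hkk0 (by rw [hk0_def, ← h, Equiv.symm_apply_apply])
            rw [hv_val, if_neg hka, hgk, hb'_val, if_neg hek]
            exact hu_e k
      have hJ : Jlam lam b' ≤ ∑ k, lam k * v k := Jlam_le lam hlamA b' v hv_anti g hvg
      have hJb : Jlam lam bstar = ∑ k, lam k * u k := rfl
      have h2 : ∑ k, lam k * v k = Jlam lam bstar + lam a * ε := by
        have h3 := sum_comp_update (fun k x => lam k * x) u a ε
        rw [hv_def, h3, hua, hJb]
        ring
      have hQ : ∑ k, (y k - d k * b' k) ^ 2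
          = (∑ k, (y k - d k * bstar k) ^ 2) + ((y i - d i * ε) ^ 2 - (y i) ^ 2) := by
        have h3 := sum_comp_update (fun k x => (y k - d k * x) ^ 2) bstar i ε
        rw [hb'_def, h3, hi]
        ring
      have hopt := hbstar b'
      simp only [slopeObj] at hopt
      have hΔ : (y i - d i * ε) ^ 2 - (y i) ^ 2 = -2 * y i * d i * ε + d i ^ 2 * ε ^ 2 := by
        ring
      nlinarith [hJ, h2, hQ, hopt, hΔ]
    have := aux_limit (lam a - d i * y i) (d i ^ 2 / 2) (u rm) (by positivity) hurm key
    linarith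
  ---------------------------------------------------------------------------
  -- Part B : perturbing coordinate j
  ---------------------------------------------------------------------------
  -- m : the largest sorted position carrying the value |t|
  have hTne : (Finset.univ.filter (fun k => u k = |t|)).Nonempty := ⟨k1, by simp [huk1]⟩
  obtain ⟨m, hum, hmmax⟩ : ∃ m : Fin p, u m = |t| ∧ ∀ k, u k = |t| → k ≤ m :=
    ⟨_, (Finset.mem_filter.mp (Finset.max'_mem _ hTne)).2,
      fun k hk => Finset.le_max' _ k (Finset.mem_filter.mpr ⟨Finset.mem_univ k, hk⟩)⟩
  have hmr : (m : ℕ) < r := (hu_iff m).mp (by rw [hum]; exact abs_ne_zero.mpr htne)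
  have hmlt : ∀ k, m < k → u k < |t| := by
    intro k hk
    have h1 : u k ≤ |t| := hum ▸ hu_anti hk.le
    rcases lt_or_eq_of_le h1 with h | h
    · exact h
    · exact absurd (hmmax k h) (not_le.mpr hk)
  obtain ⟨ε₀, hε₀pos, hε₀le, hε₀le2⟩ :
      ∃ ε₀ : ℝ, 0 < ε₀ ∧ ε₀ ≤ |t| ∧ ∀ k, m < k → ε₀ ≤ |t| - u k := by
    refine ⟨Finset.univ.inf' ⟨m, Finset.mem_univ m⟩
      (fun k => if m < k then |t| - u k else |t|), ?_, ?_, ?_⟩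
    · apply (Finset.lt_inf'_iff ..).mpr
      intro k _
      by_cases h : m < k
      · rw [if_pos h]; linarith [hmlt k h]
      · rw [if_neg h]; exact htpos
    · have := Finset.inf'_le (fun k => if m < k then |t| - u k else |t|) (Finset.mem_univ m)
      simpa using this
    · intro k hk
      have := Finset.inf'_le (fun k => if m < k then |t| - u k else |t|) (Finset.mem_univ k)
      rwa [if_pos hk] at this
  -- sign of t
  set s0 : ℝ := if 0 < t then 1 else -1 with hs0_def
  have hst : s0 * t = |t| := by
    rcases lt_trichotomy t 0 with h | h | h
    · rw [hs0_def, if_neg (by linarith), abs_of_neg h]; ring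
    · exact absurd h htne
    · rw [hs0_def, if_pos h, abs_of_pos h]; ring
  have hs2 : s0 ^ 2 = 1 := by
    rcases lt_trichotomy t 0 with h | h | h
    · rw [hs0_def, if_neg (by linarith)]; ring
    · exact absurd h htne
    · rw [hs0_def, if_pos h]; ring
  have habs : ∀ ε : ℝ, 0 < ε → ε < ε₀ → |t - ε * s0| = |t| - ε := by
    intro ε h1 h2
    have h3 : ε < |t| := lt_of_lt_of_le h2 hε₀le
    rcases lt_trichotomy t 0 with h | h | h
    · rw [abs_of_neg h] at h3
      rw [hs0_def, if_neg (by linarith), abs_of_neg h,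
        abs_of_nonpos (by linarith : t - ε * (-1) ≤ 0)]
      ring
    · exact absurd h htne
    · rw [abs_of_pos h] at h3
      rw [hs0_def, if_pos h, abs_of_pos h,
        abs_of_nonneg (by linarith : (0:ℝ) ≤ t - ε * 1)]
      ring
  have keyB : ∀ ε : ℝ, 0 < ε → ε < ε₀ →
      0 ≤ (d j * s0 * (y j - d j * t) - lam m) * ε + (d j ^ 2 / 2) * ε ^ 2 := by
    intro ε hε1 hε2
    set b' := Function.update bstar j (t - ε * s0) with hb'_def
    have hb'_val : ∀ k, b' k = if k = j then t - ε * s0 else bstar k := by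
      intro k; rw [hb'_def, Function.update_apply]
    set v := Function.update u m (|t| - ε) with hv_def
    have hv_val : ∀ k, v k = if k = m then |t| - ε else u k := by
      intro k; rw [hv_def, Function.update_apply]
    have hv_anti : Antitone v := by
      intro k l hkl
      rw [hv_val, hv_val]
      by_cases hk : k = m <;> by_cases hl : l = m
      · rw [if_pos hk, if_pos hl]
      · rw [if_pos hk, if_neg hl]
        have hml : m < l := lt_of_le_of_ne (by rw [← hk]; exact hkl) (fun h => hl h.symm)
        have := hε₀le2 l hml
        linarith
      · rw [if_neg hk, if_pos hl]
        have h1 : k ≤ m := by rw [← hl]; exact hkl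
        have h2 : u m ≤ u k := hu_anti h1
        rw [hum] at h2
        linarith
      · rw [if_neg hk, if_neg hl]; exact hu_anti hkl
    set g := (Equiv.swap m k1).trans e with hg_def
    have hvg : ∀ k, v k = |b' (g k)| := by
      intro k
      rcases eq_or_ne k m with rfl | hkm
      · have hgk : g k = j := by
          show e ((Equiv.swap k k1) k) = j
          rw [Equiv.swap_apply_left, hek1]
        rw [hv_val, if_pos rfl, hgk, hb'_val, if_pos rfl, habs ε hε1 hε2]
      · rcases eq_or_ne k k1 with rfl | hkk1
        · have hgk : g k1 = e m := by
            show e ((Equiv.swap m k1) k1) = e m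
            rw [Equiv.swap_apply_right]
          have hem : e m ≠ j := by
            intro h
            apply hkm
            have : e.symm j = m := by rw [← h, Equiv.symm_apply_apply]
            rw [hk1_def, this]
          rw [hv_val, if_neg hkm, hgk, hb'_val, if_neg hem, ← hu_e, hum, huk1]
        · have hgk : g k = e k := by
            rw [hg_def, Equiv.trans_apply, Equiv.swap_apply_of_ne_of_ne hkm hkk1]
          have hek : e k ≠ j := fun h => hkk1 (by rw [hk1_def, ← h, Equiv.symm_apply_apply])
          rw [hv_val, if_neg hkm, hgk, hb'_val, if_neg hek]
          exact hu_e k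
    have hJ : Jlam lam b' ≤ ∑ k, lam k * v k := Jlam_le lam hlamA b' v hv_anti g hvg
    have hJb : Jlam lam bstar = ∑ k, lam k * u k := rfl
    have h2 : ∑ k, lam k * v k = Jlam lam bstar - lam m * ε := by
      have h3 := sum_comp_update (fun k x => lam k * x) u m (|t| - ε)
      rw [hv_def, h3, hum, hJb]
      ring
    have hQ : ∑ k, (y k - d k * b' k) ^ 2
        = (∑ k, (y k - d k * bstar k) ^ 2)
          + ((y j - d j * (t - ε * s0)) ^ 2 - (y j - d j * t) ^ 2) := by
      have h3 := sum_comp_update (fun k x => (y k - d k * x) ^ 2) bstar j (t - ε * s0)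
      rw [hb'_def, h3, ← ht_def]
    have hopt := hbstar b'
    simp only [slopeObj] at hopt
    have hΔ : (y j - d j * (t - ε * s0)) ^ 2 - (y j - d j * t) ^ 2
        = 2 * d j * ε * s0 * (y j - d j * t) + d j ^ 2 * ε ^ 2 * s0 ^ 2 := by
      ring
    rw [hs2] at hΔ
    nlinarith [hJ, h2, hQ, hopt, hΔ]
  have hB := aux_limit (d j * s0 * (y j - d j * t) - lam m) (d j ^ 2 / 2) ε₀
    (by positivity) hε₀pos keyB
  rcases lt_trichotomy t 0 with h | h | h
  · rw [hs0_def, if_neg (by linarith)] at hB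
    nlinarith [hB, hlam_nonneg m, mul_nonneg (hd j).le (hy j),
      mul_pos (mul_pos (hd j) (hd j)) (neg_pos.mpr h)]
  · exact htne h
  · rw [hs0_def, if_pos h] at hB
    have hma : lam a ≤ lam m := hlam_anti m a (by rw [Fin.le_def]; omega)
    have hchain : d j * y j ≤ d i * y i := hord i j hij
    nlinarith [hA, hchain, hma, mul_pos (mul_pos (hd j) (hd j)) h, hB]

/-- If `y ⪰ 0`, `d₁y₁ ≥ … ≥ d_p y_p`, and the minimizer `b*` of the diagonal SLOPE objective
has exactly `r > 0` nonzero entries, then the support of `b*` is exactly `{1,…,r}`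
(0-indexed: the indices `i` with `i < r`). -/
theorem slope_support_initial_segment {p : ℕ} (d y lam : Fin p → ℝ)
    (hd : ∀ i, 0 < d i)
    (hlam_anti : ∀ i j : Fin p, i ≤ j → lam j ≤ lam i)
    (hlam_nonneg : ∀ i, 0 ≤ lam i)
    (hy : ∀ i, 0 ≤ y i)
    (hord : ∀ i j : Fin p, i ≤ j → d j * y j ≤ d i * y i)
    (bstar : Fin p → ℝ)
    (hbstar : ∀ b, slopeObj d y lam bstar ≤ slopeObj d y lam b)
    (r : ℕ) (hr : 0 < r)
    (hcard : {i : Fin p | bstar i ≠ 0}.ncard = r) :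
    ∀ i : Fin p, bstar i ≠ 0 ↔ (i : ℕ) < r := by
  intro i
  exact initseg {i : Fin p | bstar i ≠ 0}
    (fun a b hab hb => key_step d y lam hd hlam_anti hlam_nonneg hy hord bstar hbstar r
      hcard a b hab hb) hcard i
end
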